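/- Let K be a field of characteristic zero, let n ≥ 2 and d ≥ 2 be integers, let A = K[x_1,…,x_n] be the polynomial algebra, and let A_0 be the Veronese subalgebra of A of degree d. Then every locally nilpotent K-derivation D : A_0 → A_0 is induced by a locally nilpotent d-graded K-derivation of A; that is, there exists a K-derivation S : A → A such that S(x_i) ∈ A_1 for all i, S restricted to A_0 equals D, and for every f ∈ A there is a natural number m with S^m(f) = 0. -/

import Mathlib

set_option synthInstance.maxHeartbeats 1000000
set_option maxHeartbeats 1000000

open MvPolynomial

/-- Total degree of a monomial exponent vector. -/
def mdeg {n : ℕ} (m : Fin n →₀ ℕ) : ℕ := m.sum fun _ k => k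

lemma mdeg_add {n : ℕ} (a b : Fin n →₀ ℕ) : mdeg (a + b) = mdeg a + mdeg b :=
  Finsupp.sum_add_index' (fun _ => rfl) (fun _ _ _ => rfl)

/-- The `i`-th component `A_i` of the `ℤ/d`-grading of `K[x_1,…,x_n]`:
polynomials all of whose monomials have total degree ≡ i (mod d). -/
def comp (K : Type) [Field K] (n d i : ℕ) : Submodule K (MvPolynomial (Fin n) K) where
  carrier := {f | ∀ m ∈ f.support, mdeg m % d = i % d}
  add_mem' := by
    intro f g hf hg m hm
    rcases Finset.mem_union.mp (MvPolynomial.support_add hm) with h | h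
    · exact hf m h
    · exact hg m h
  zero_mem' := by intro m hm; simp at hm
  smul_mem' := by
    intro c f hf m hm
    exact hf m (Finsupp.support_smul hm)

/-- The Veronese subalgebra `A_0` of degree `d`. -/
noncomputable def veronese (K : Type) [Field K] (n d : ℕ) : Subalgebra K (MvPolynomial (Fin n) K) :=
  (comp K n d 0).toSubalgebra
    (by
      classical
      intro m hm
      rw [show (1 : MvPolynomial (Fin n) K) = MvPolynomial.monomial 0 1 from rfl,
        MvPolynomial.support_monomial] at hm
      simp only [one_ne_zero, if_false, Finset.mem_singleton] at hm
      subst hm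
      simp [mdeg])
    (by
      intro f g hf hg m hm
      obtain ⟨a, ha, b, hb, rfl⟩ := Finset.mem_add.mp (MvPolynomial.support_mul _ _ hm)
      rw [mdeg_add, Nat.add_mod, hf a ha, hg b hb]
      simp)

lemma X_pow_mem (K : Type) [Field K] (n d : ℕ) (i : Fin n) :
    (MvPolynomial.X i : MvPolynomial (Fin n) K) ^ d ∈ veronese K n d := by
  classical
  intro m hm
  rw [MvPolynomial.X_pow_eq_monomial, MvPolynomial.support_monomial] at hm
  simp only [one_ne_zero, if_false, Finset.mem_singleton] at hm
  subst hm
  simp [mdeg, Finsupp.sum_single_index, Nat.mod_self]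

open Finset

section Generic
variable {K : Type} [Field K] {n d : ℕ}

lemma mdeg_single (i : Fin n) (k : ℕ) : mdeg (Finsupp.single i k) = k := by
  simp [mdeg, Finsupp.sum_single_index]

lemma mem_comp_iff {i : ℕ} {f : MvPolynomial (Fin n) K} :
    f ∈ comp K n d i ↔ ∀ m ∈ f.support, mdeg m % d = i % d := Iff.rfl

lemma comp_congr {i j : ℕ} (h : i % d = j % d) : comp K n d i = comp K n d j := by
  apply Submodule.ext
  intro f
  simp only [mem_comp_iff, h]

lemma mul_mem_comp {i j : ℕ} {f g : MvPolynomial (Fin n) K}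
    (hf : f ∈ comp K n d i) (hg : g ∈ comp K n d j) : f * g ∈ comp K n d (i + j) := by
  intro m hm
  obtain ⟨a, ha, b, hb, rfl⟩ := Finset.mem_add.mp (MvPolynomial.support_mul _ _ hm)
  rw [mdeg_add, Nat.add_mod, hf a ha, hg b hb, ← Nat.add_mod]

lemma monomial_mem_comp {i : ℕ} {m : Fin n →₀ ℕ} (c : K) (h : mdeg m % d = i % d) :
    monomial m c ∈ comp K n d i := by
  classical
  intro m' hm'
  rw [MvPolynomial.support_monomial] at hm'
  by_cases hc : c = 0
  · simp [hc] at hm'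
  · simp only [hc, if_false, Finset.mem_singleton] at hm'
    subst hm'; exact h

lemma one_mem_comp : (1 : MvPolynomial (Fin n) K) ∈ comp K n d 0 := by
  have := monomial_mem_comp (K := K) (n := n) (d := d) (i := 0) (m := 0) 1 (by simp [mdeg])
  simpa using this

lemma X_mem_comp {i : Fin n} : (X i : MvPolynomial (Fin n) K) ∈ comp K n d 1 := by
  have h : (X i : MvPolynomial (Fin n) K) = monomial (Finsupp.single i 1) 1 := by
    rw [← X_pow_eq_monomial, pow_one]
  rw [h]
  exact monomial_mem_comp 1 (by rw [mdeg_single])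

lemma pow_mem_comp {i : ℕ} {f : MvPolynomial (Fin n) K} (h : f ∈ comp K n d i) (k : ℕ) :
    f ^ k ∈ comp K n d (k * i) := by
  induction k with
  | zero => simpa using one_mem_comp
  | succ k ih =>
      have hfk : f ^ (k + 1) = f ^ k * f := by ring
      rw [hfk, show (k+1) * i = k * i + i by ring]
      exact mul_mem_comp ih h

lemma mem_veronese_iff {f : MvPolynomial (Fin n) K} :
    f ∈ veronese K n d ↔ f ∈ comp K n d 0 := by
  exact Iff.rfl

lemma X_pow_dvd_iff {k : ℕ} {i : Fin n} {F : MvPolynomial (Fin n) K} :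
    (X i : MvPolynomial (Fin n) K) ^ k ∣ F ↔ ∀ m ∈ F.support, k ≤ m i := by
  classical
  rw [X_pow_eq_monomial, monomial_one_dvd_iff_modMonomial_eq_zero]
  constructor
  · intro h m hm
    by_contra hk
    have hle : ¬ Finsupp.single i k ≤ m := by
      rw [Finsupp.single_le_iff]; exact hk
    have h2 := MvPolynomial.coeff_modMonomial_of_not_le F hle
    rw [h] at h2
    simp only [coeff_zero] at h2
    exact (MvPolynomial.mem_support_iff.mp hm) h2.symm
  · intro h
    apply MvPolynomial.ext
    intro m
    rw [coeff_zero]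
    by_cases hle : Finsupp.single i k ≤ m
    · exact MvPolynomial.coeff_modMonomial_of_le F hle
    · rw [MvPolynomial.coeff_modMonomial_of_not_le F hle]
      by_contra hc
      have hm : m ∈ F.support := MvPolynomial.mem_support_iff.mpr hc
      exact hle (Finsupp.single_le_iff.mpr (h m hm))

lemma dvd_of_mul_eq {i j : Fin n} (hij : j ≠ i) {N k : ℕ} {F E : MvPolynomial (Fin n) K}
    (h : (X j : MvPolynomial (Fin n) K) ^ N * F = X i ^ k * E) :
    (X i : MvPolynomial (Fin n) K) ^ k ∣ F := by
  classical
  rw [X_pow_dvd_iff]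
  intro m hm
  have hmem : m + Finsupp.single j N ∈ ((X j : MvPolynomial (Fin n) K) ^ N * F).support := by
    rw [MvPolynomial.mem_support_iff]
    have hco : coeff (m + Finsupp.single j N) ((X j : MvPolynomial (Fin n) K) ^ N * F)
        = coeff m F := by
      rw [mul_comm, X_pow_eq_monomial, MvPolynomial.coeff_mul_monomial, mul_one]
    rw [hco]
    exact MvPolynomial.mem_support_iff.mp hm
  rw [h] at hmem
  have hdvd : (X i : MvPolynomial (Fin n) K) ^ k ∣ X i ^ k * E := Dvd.intro E rfl
  have h2 := X_pow_dvd_iff.mp hdvd _ hmem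
  simpa [Finsupp.single_apply, hij] using h2

lemma comp1_of_mul {g : MvPolynomial (Fin n) K} {i : Fin n} (hd : 2 ≤ d)
    (h : g * (X i : MvPolynomial (Fin n) K) ^ (d - 1) ∈ comp K n d 0) :
    g ∈ comp K n d 1 := by
  intro m hm
  have hmem : m + Finsupp.single i (d-1)
      ∈ (g * (X i : MvPolynomial (Fin n) K) ^ (d-1)).support := by
    rw [MvPolynomial.mem_support_iff, X_pow_eq_monomial, MvPolynomial.coeff_mul_monomial, mul_one]
    exact MvPolynomial.mem_support_iff.mp hm
  have h0 := h _ hmem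
  rw [mdeg_add, mdeg_single, Nat.zero_mod] at h0
  have h1 : (mdeg m + (d - 1) + 1) % d = 1 % d := by
    rw [Nat.add_mod, h0, Nat.zero_add, Nat.mod_mod_of_dvd _ (dvd_refl d)]
  rwa [show mdeg m + (d-1) + 1 = mdeg m + d by omega, Nat.add_mod_right] at h1

lemma mdeg_sub_single {v : Fin n →₀ ℕ} {i : Fin n} (h : i ∈ v.support) :
    mdeg (v - Finsupp.single i 1) + 1 = mdeg v := by
  have hv : (v - Finsupp.single i 1) + Finsupp.single i 1 = v := by
    ext a
    rcases eq_or_ne a i with rfl | hne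
    · have : 1 ≤ v a := by
        have := Finsupp.mem_support_iff.mp h
        omega
      simp [Finsupp.single_apply]
      omega
    · simp [Finsupp.single_apply, hne.symm, Ne.symm hne]
  conv_rhs => rw [← hv]
  rw [mdeg_add, mdeg_single]

lemma prod_X_pow_eq_monomial' {v : Fin n →₀ ℕ} :
    (∏ j : Fin n, (X j : MvPolynomial (Fin n) K) ^ v j) = monomial v 1 := by
  rw [MvPolynomial.monomial_eq, C_1, one_mul]
  rw [Finsupp.prod_fintype]
  intro i; exact pow_zero _

lemma sum_eq_mdeg {v : Fin n →₀ ℕ} : (∑ j : Fin n, v j) = mdeg v := by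
  rw [mdeg, Finsupp.sum_fintype]
  intro i; rfl

end Generic

section Nil

variable {K A : Type} [CommRing K] [CommRing A] [Algebra K A]

open Finset

lemma iterate_leibniz (S : Derivation K A A) (n : ℕ) (p q : A) :
    (S.toLinearMap ^ n) (p * q) =
      ∑ k ∈ range (n+1), n.choose k • ((S.toLinearMap ^ (n-k)) p * (S.toLinearMap ^ k) q) := by
  set L := S.toLinearMap with hL
  have hstep : ∀ (m : ℕ) (x : A), (L ^ (m+1)) x = L ((L ^ m) x) := by
    intro m x
    rw [pow_succ' L m, Module.End.mul_apply]
  have hLmul : ∀ a b : A, L (a * b) = a * L b + b * L a := by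
    intro a b
    show S (a * b) = a * S b + b * S a
    rw [S.leibniz, smul_eq_mul, smul_eq_mul]
  induction n with
  | zero => simp [Finset.range]
  | succ n IH =>
    have step1 : (L ^ (n + 1)) (p * q) =
        (∑ k ∈ range (n+1), n.choose k • ((L ^ (n - k + 1)) p * (L ^ k) q)) +
          ∑ k ∈ range (n+1), n.choose k • ((L ^ (n - k)) p * (L ^ (k + 1)) q) := by
      rw [hstep, IH, map_sum]
      simp_rw [map_nsmul, hLmul, smul_add, Finset.sum_add_distrib, hstep]
      rw [add_comm]
      congr 1
      all_goals exact Finset.sum_congr rfl fun k _ => by rw [mul_comm]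
    have step2 : (∑ k ∈ range (n+1), n.choose k • ((L ^ (n - k + 1)) p * (L ^ k) q)) =
        (∑ k ∈ range (n+1), n.choose (k+1) • ((L ^ (n - k)) p * (L ^ (k + 1)) q)) +
          1 • ((L ^ (n + 1)) p * (L ^ 0) q) := by
      rw [Finset.sum_range_succ' (fun k => n.choose k • ((L ^ (n - k + 1)) p * (L ^ k) q)) n,
        Finset.sum_range_succ (fun k => n.choose (k+1) • ((L ^ (n - k)) p * (L ^ (k+1)) q)) n]
      simp only [Nat.choose_succ_self, zero_smul, add_zero, Nat.choose_zero_right,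
        Nat.sub_zero, one_smul]
      congr 1
      refine Finset.sum_congr rfl fun k hk => ?_
      rw [Finset.mem_range] at hk
      rw [show n - (k+1) + 1 = n - k by omega]
    have step3 : ∑ k ∈ range (n+2), (n+1).choose k • ((L ^ (n + 1 - k)) p * (L ^ k) q)
        = (∑ k ∈ range (n+1),
            ((n.choose k + n.choose (k+1))) • ((L ^ (n - k)) p * (L ^ (k + 1)) q)) +
          1 • ((L ^ (n + 1)) p * (L ^ 0) q) := by
      rw [Finset.sum_range_succ' (fun k => (n+1).choose k • ((L ^ (n + 1 - k)) p * (L ^ k) q))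
        (n+1)]
      simp only [Nat.choose_zero_right, Nat.sub_zero, one_smul]
      congr 1
      refine Finset.sum_congr rfl fun k hk => ?_
      rw [Nat.choose_succ_succ, Nat.succ_sub_succ]
    rw [step1, step2, step3]
    simp_rw [add_smul, Finset.sum_add_distrib]
    abel

lemma pow_apply_zero_mono (L : A →ₗ[K] A) {x : A} {p q : ℕ} (h : (L ^ p) x = 0) (hpq : p ≤ q) :
    (L ^ q) x = 0 := by
  obtain ⟨r, rfl⟩ := Nat.exists_eq_add_of_le hpq
  rw [show p + r = r + p by omega, pow_add, Module.End.mul_apply, h, map_zero]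

lemma nu_exists (L : A →ₗ[K] A) {x : A} (hx : x ≠ 0) {M : ℕ} (hM : (L ^ M) x = 0) :
    ∃ p, (L ^ p) x ≠ 0 ∧ (L ^ (p+1)) x = 0 := by
  induction M with
  | zero => exact absurd hM hx
  | succ M IH =>
    by_cases h : (L ^ M) x = 0
    · exact IH h
    · exact ⟨M, h, hM⟩

variable [IsDomain A] [CharZero A]

lemma nsmul_eq_zero_iff' {k : ℕ} (hk : k ≠ 0) {x : A} : k • x = 0 ↔ x = 0 := by
  rw [nsmul_eq_mul, mul_eq_zero]
  simp [Nat.cast_eq_zero, hk]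

lemma nil_mul (S : Derivation K A A) {a b : A} {p q : ℕ}
    (ha : (S.toLinearMap ^ p) a = 0) (hb : (S.toLinearMap ^ q) b = 0) :
    (S.toLinearMap ^ (p + q)) (a * b) = 0 := by
  rw [iterate_leibniz]
  apply Finset.sum_eq_zero
  intro k hk
  rcases le_or_gt q k with h | h
  · rw [pow_apply_zero_mono S.toLinearMap hb h, mul_zero, smul_zero]
  · have : p ≤ p + q - k := by omega
    rw [pow_apply_zero_mono S.toLinearMap ha this, zero_mul, smul_zero]

lemma nu_mul (S : Derivation K A A) {a b : A} {p q : ℕ}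
    (ha1 : (S.toLinearMap ^ p) a ≠ 0) (ha2 : (S.toLinearMap ^ (p+1)) a = 0)
    (hb1 : (S.toLinearMap ^ q) b ≠ 0) (hb2 : (S.toLinearMap ^ (q+1)) b = 0) :
    (S.toLinearMap ^ (p + q)) (a * b) ≠ 0 ∧ (S.toLinearMap ^ (p + q + 1)) (a * b) = 0 := by
  constructor
  · rw [iterate_leibniz]
    have hsingle : ∀ k ∈ range (p + q + 1), k ≠ q →
        (p+q).choose k • ((S.toLinearMap ^ (p + q - k)) a * (S.toLinearMap ^ k) b) = 0 := by
      intro k _ hkq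
      rcases lt_or_gt_of_ne hkq with h | h
      · have : p + 1 ≤ p + q - k := by omega
        rw [pow_apply_zero_mono S.toLinearMap ha2 this, zero_mul, smul_zero]
      · have : q + 1 ≤ k := by omega
        rw [pow_apply_zero_mono S.toLinearMap hb2 this, mul_zero, smul_zero]
    rw [Finset.sum_eq_single_of_mem q (by simp [Finset.mem_range]) hsingle]
    rw [show p + q - q = p by omega]
    have hch : (p+q).choose q ≠ 0 := (Nat.choose_pos (Nat.le_add_left q p)).ne'
    rw [Ne, nsmul_eq_zero_iff' hch, mul_eq_zero]
    push_neg
    exact ⟨ha1, hb1⟩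
  · rw [iterate_leibniz]
    apply Finset.sum_eq_zero
    intro k hk
    rcases le_or_gt (q+1) k with h | h
    · rw [pow_apply_zero_mono S.toLinearMap hb2 h, mul_zero, smul_zero]
    · have hle : p + 1 ≤ p + q + 1 - k := by omega
      rw [pow_apply_zero_mono S.toLinearMap ha2 hle, zero_mul, smul_zero]

lemma nu_pow (S : Derivation K A A) {a : A} {p : ℕ}
    (ha1 : (S.toLinearMap ^ p) a ≠ 0) (ha2 : (S.toLinearMap ^ (p+1)) a = 0) (k : ℕ) :
    (S.toLinearMap ^ (k * p)) (a ^ k) ≠ 0 ∧ (S.toLinearMap ^ (k * p + 1)) (a ^ k) = 0 := by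
  induction k with
  | zero =>
    constructor
    · simp only [Nat.zero_mul, pow_zero, Module.End.one_apply]
      exact one_ne_zero
    · simp only [Nat.zero_mul, pow_zero, pow_one]
      show S 1 = 0
      exact Derivation.map_one_eq_zero S
  | succ k IH =>
    have h := nu_mul S IH.1 IH.2 ha1 ha2
    rw [show k * p + p = (k+1) * p by ring] at h
    rw [show a ^ (k+1) = a ^ k * a by ring]
    exact h

end Nil

/-- every locally nilpotent `K`-derivation of the Veronese subalgebra `A₀` is
induced by a locally nilpotent `d`-graded `K`-derivation of `A = K[x₁,…,xₙ]`. -/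
theorem stmt1 (K : Type) [Field K] [CharZero K] (n d : ℕ) (hn : 2 ≤ n) (hd : 2 ≤ d)
    (D : Derivation K (veronese K n d) (veronese K n d))
    (hD : ∀ b : veronese K n d, ∃ m : ℕ, (D.toLinearMap ^ m) b = 0) :
    ∃ S : Derivation K (MvPolynomial (Fin n) K) (MvPolynomial (Fin n) K),
      (∀ i : Fin n, S (MvPolynomial.X i) ∈ comp K n d 1) ∧
      (∀ a : veronese K n d, S ↑a = ↑(D a)) ∧
      (∀ f : MvPolynomial (Fin n) K, ∃ m : ℕ, (S.toLinearMap ^ m) f = 0) := by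
  classical
  obtain ⟨e, rfl⟩ : ∃ e, d = e + 2 := ⟨d - 2, by omega⟩
  let i0 : Fin n := ⟨0, by omega⟩
  let τ : Fin n → Fin n := fun i => if i = i0 then ⟨1, by omega⟩ else i0
  have hτ : ∀ i, τ i ≠ i := by
    intro i
    by_cases h : i = i0
    · subst h
      simp only [τ, if_pos rfl]
      intro hc
      have := congrArg Fin.val hc
      simp [i0] at this
    · simp only [τ, if_neg h]
      exact fun hc => h hc.symm
  -- the elements W i = X i ^ d and V i j = X i * X j ^ (d-1) of the Veronese algebra
  have hWmem : ∀ i : Fin n, (X i ^ (e+2) : MvPolynomial (Fin n) K) ∈ veronese K n (e+2) := fun i =>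
    X_pow_mem K n (e+2) i
  let W : Fin n → veronese K n (e+2) := fun i => ⟨X i ^ (e+2), hWmem i⟩
  have hVmem : ∀ i j : Fin n, (X i * X j ^ (e+1) : MvPolynomial (Fin n) K) ∈ veronese K n (e+2) := by
    intro i j
    have h1 := mul_mem_comp (X_mem_comp (K := K) (d := e+2) (i := i)) (pow_mem_comp (X_mem_comp (K := K) (d := e+2) (i := j)) (e+1))
    have h2 : (1 + (e+1) * 1) % (e+2) = 0 % (e+2) := by
      rw [Nat.mul_one, Nat.zero_mod, show 1 + (e+1) = e + 2 by omega, Nat.mod_self]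
    exact mem_veronese_iff.mpr (by rwa [comp_congr h2] at h1)
  let Vij : Fin n → Fin n → veronese K n (e+2) := fun i j => ⟨X i * X j ^ (e+1), hVmem i j⟩
  -- the fundamental relation
  have hcoeV : ∀ i j : Fin n, ((Vij i j : veronese K n (e+2)) : MvPolynomial (Fin n) K) = X i * X j ^ (e+1) := fun i j => rfl
  have hcoeW : ∀ i : Fin n, ((W i : veronese K n (e+2)) : MvPolynomial (Fin n) K) = X i ^ (e+2) := fun i => rfl
  have hrel : ∀ i j : Fin n, (Vij i j) ^ (e+2) = W i * (W j) ^ (e+1) := by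
    intro i j
    apply Subtype.ext
    rw [SubmonoidClass.coe_pow, MulMemClass.coe_mul, SubmonoidClass.coe_pow,
      hcoeV, hcoeW, hcoeW]
    ring
  -- apply D to the relation and coerce to A
  have hArel : ∀ i j : Fin n,
      ((e+2 : ℕ) : MvPolynomial (Fin n) K) * ((X i * X j ^ (e+1)) ^ (e+1) * (↑(D (Vij i j)) : MvPolynomial (Fin n) K))
        = (X j : MvPolynomial (Fin n) K) ^ ((e+2)*(e+1)) * (↑(D (W i)) : MvPolynomial (Fin n) K)
          + ((e+1 : ℕ) : MvPolynomial (Fin n) K) * ((X i : MvPolynomial (Fin n) K) ^ (e+2) * (X j : MvPolynomial (Fin n) K) ^ ((e+2)*e) * (↑(D (W j)) : MvPolynomial (Fin n) K)) := by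
    intro i j
    have hrelD := congrArg D (hrel i j)
    rw [Derivation.leibniz_pow, Derivation.leibniz, Derivation.leibniz_pow] at hrelD
    simp only [show e+2-1 = e+1 from rfl, show e+1-1 = e from rfl, smul_eq_mul,
      nsmul_eq_mul] at hrelD
    have h0 := congrArg (Subalgebra.val (veronese K n (e+2))) hrelD
    simp only [map_add, map_mul, map_pow, map_natCast, Subalgebra.coe_val] at h0
    simp only [hcoeV, hcoeW] at h0
    linear_combination h0
  -- divisibility
  have hdvd : ∀ i : Fin n, (X i : MvPolynomial (Fin n) K) ^ (e+1) ∣ (↑(D (W i)) : MvPolynomial (Fin n) K) := by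
    intro i
    apply dvd_of_mul_eq (hτ i) (N := (e+2)*(e+1))
      (E := ((e+2 : ℕ) : MvPolynomial (Fin n) K) * ((X (τ i) : MvPolynomial (Fin n) K) ^ ((e+1)*(e+1)) * (↑(D (Vij i (τ i))) : MvPolynomial (Fin n) K))
        - ((e+1 : ℕ) : MvPolynomial (Fin n) K) * ((X i : MvPolynomial (Fin n) K) * (X (τ i) : MvPolynomial (Fin n) K) ^ ((e+2)*e) * (↑(D (W (τ i))) : MvPolynomial (Fin n) K)))
    linear_combination -(hArel i (τ i))
  let g : Fin n → MvPolynomial (Fin n) K := fun i => (hdvd i).choose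
  have hg : ∀ i, (↑(D (W i)) : MvPolynomial (Fin n) K) = X i ^ (e+1) * g i := fun i => (hdvd i).choose_spec
  have hKne : ((e+2 : ℕ) : K) ≠ 0 := Nat.cast_ne_zero.mpr (by omega)
  let s : Fin n → MvPolynomial (Fin n) K := fun i => ((e+2 : ℕ) : K)⁻¹ • g i
  let S : Derivation K (MvPolynomial (Fin n) K) (MvPolynomial (Fin n) K) := mkDerivation K s
  have hSX : ∀ i, S (X i) = s i := fun i => mkDerivation_X K s i
  -- g i and s i lie in comp 1
  have hgmem : ∀ i, g i ∈ comp K n (e+2) 1 := by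
    intro i
    apply comp1_of_mul (by omega)
    rw [show (e+2) - 1 = e + 1 from rfl, mul_comm, ← hg i]
    rw [← mem_veronese_iff]
    exact (D (W i)).2
  have hsmem : ∀ i, s i ∈ comp K n (e+2) 1 := fun i =>
    Submodule.smul_mem _ _ (hgmem i)
  -- S preserves each component
  have Sgrade : ∀ (r : ℕ) (f : MvPolynomial (Fin n) K), f ∈ comp K n (e+2) r → S f ∈ comp K n (e+2) r := by
    intro r f hf
    have hf' : S f = ∑ v ∈ f.support, S (monomial v (coeff v f)) := by
      conv_lhs => rw [f.as_sum]
      exact map_sum S.toLinearMap _ _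
    rw [hf']
    apply Submodule.sum_mem
    intro v hv
    rw [show S (monomial v (coeff v f)) = mkDerivation K s (monomial v (coeff v f)) from rfl,
      mkDerivation_monomial]
    apply Submodule.smul_mem
    apply Submodule.finsuppSum_mem
    intro i hi
    have hik : i ∈ v.support := Finsupp.mem_support_iff.mpr hi
    have h1 := mul_mem_comp (monomial_mem_comp (K := K) (d := e+2)
      (m := v - Finsupp.single i 1) ((v i : K)) rfl) (hsmem i)
    have h2 : (mdeg (v - Finsupp.single i 1) + 1) % (e+2) = r % (e+2) := by
      rw [mdeg_sub_single hik]
      exact hf v hv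
    rwa [comp_congr h2] at h1

  -- ======================= agreement with D =======================
  have hcast : ∀ x : veronese K n (e+2), ((x : veronese K n (e+2)) : MvPolynomial (Fin n) K)
      = Subalgebra.val _ x := fun x => rfl
  have hker_mul : ∀ a b : veronese K n (e+2),
      S ↑a = ↑(D a) → S ↑b = ↑(D b) → S ↑(a * b) = ↑(D (a * b)) := by
    intro a b ha hb
    have hD2 : ((D (a * b) : veronese K n (e+2)) : MvPolynomial (Fin n) K)
        = ↑a * ↑(D b) + ↑b * ↑(D a) := by
      rw [Derivation.leibniz, smul_eq_mul, smul_eq_mul]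
      push_cast
      ring
    have hS2 : S ((a : MvPolynomial (Fin n) K) * (b : MvPolynomial (Fin n) K))
        = ↑a * S ↑b + ↑b * S ↑a := by
      rw [Derivation.leibniz, smul_eq_mul, smul_eq_mul]
    rw [MulMemClass.coe_mul, hS2, ha, hb, hD2]
  have hker_one : S ((1 : veronese K n (e+2)) : MvPolynomial (Fin n) K) = ↑(D 1) := by
    rw [OneMemClass.coe_one, Derivation.map_one_eq_zero, Derivation.map_one_eq_zero]
    simp
  have hker_pow : ∀ a : veronese K n (e+2), S ↑a = ↑(D a) →
      ∀ k : ℕ, S ↑(a ^ k) = ↑(D (a ^ k)) := by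
    intro a ha k
    induction k with
    | zero => simpa using hker_one
    | succ k ih =>
        have h1 : a ^ (k+1) = a ^ k * a := by ring
        rw [h1]
        exact hker_mul _ _ ih ha
  have hker_smul : ∀ (c : K) (x : veronese K n (e+2)),
      S ↑x = ↑(D x) → S ↑(c • x) = ↑(D (c • x)) := by
    intro c x hx
    rw [Subalgebra.coe_smul, Derivation.map_smul, hx, Derivation.map_smul,
      Subalgebra.coe_smul]
  -- the key computation : U j is in the kernel
  have hsdef : ∀ i : Fin n, s i = C (((e+2 : ℕ) : K))⁻¹ * g i := fun i =>
    MvPolynomial.smul_eq_C_mul _ _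
  have hc : ((e+2 : ℕ) : MvPolynomial (Fin n) K) * C (((e+2 : ℕ) : K))⁻¹ = 1 := by
    rw [← MvPolynomial.C_eq_coe_nat, ← C_mul, mul_inv_cancel₀ hKne, C_1]
  have hU : ∀ j : Fin n, S ↑(Vij j i0) = ↑(D (Vij j i0)) := by
    intro j
    rw [hcoeV]
    have hS2 : S (X j * X i0 ^ (e+1)) =
        X j * (((e+1 : ℕ) : MvPolynomial (Fin n) K) * ((X i0 : MvPolynomial (Fin n) K) ^ e * s i0))
          + (X i0 : MvPolynomial (Fin n) K) ^ (e+1) * s j := by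
      rw [Derivation.leibniz, Derivation.leibniz_pow, hSX, hSX]
      simp only [smul_eq_mul, nsmul_eq_mul, show e+1-1 = e from rfl]
    rw [hS2, hsdef, hsdef]
    have hR := hArel j i0
    rw [hg j, hg i0] at hR
    have hM0ne : (((e+2 : ℕ) : MvPolynomial (Fin n) K) *
        ((X j : MvPolynomial (Fin n) K) ^ (e+1)
          * (X i0 : MvPolynomial (Fin n) K) ^ ((e+1)*(e+1)))) ≠ 0 := by
      apply mul_ne_zero
      · exact Nat.cast_ne_zero.mpr (show e + 2 ≠ 0 by omega)
      · exact mul_ne_zero (pow_ne_zero _ (X_ne_zero _)) (pow_ne_zero _ (X_ne_zero _))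
    apply mul_left_cancel₀ hM0ne
    linear_combination
      ((X j : MvPolynomial (Fin n) K) ^ (e+2) * ((e+1 : ℕ) : MvPolynomial (Fin n) K)
          * (X i0 : MvPolynomial (Fin n) K) ^ ((e+1)*(e+1)+e) * g i0
        + (X j : MvPolynomial (Fin n) K) ^ (e+1)
          * (X i0 : MvPolynomial (Fin n) K) ^ ((e+1)*(e+1)+e+1) * g j) * hc - hR
  -- cancellation
  have hker_cancel : ∀ a b : veronese K n (e+2), (↑b : MvPolynomial (Fin n) K) ≠ 0 →
      S ↑b = ↑(D b) → S ↑(a * b) = ↑(D (a * b)) → S ↑a = ↑(D a) := by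
    intro a b hb0 hb hab
    have hD2 : ((D (a * b) : veronese K n (e+2)) : MvPolynomial (Fin n) K)
        = ↑a * ↑(D b) + ↑b * ↑(D a) := by
      rw [Derivation.leibniz, smul_eq_mul, smul_eq_mul]
      push_cast
      ring
    have hS2 : S ((a : MvPolynomial (Fin n) K) * (b : MvPolynomial (Fin n) K))
        = ↑a * S ↑b + ↑b * S ↑a := by
      rw [Derivation.leibniz, smul_eq_mul, smul_eq_mul]
    rw [MulMemClass.coe_mul, hS2, hD2, hb] at hab
    exact mul_left_cancel₀ hb0 (add_left_cancel hab)
  -- monomials of the Veronese algebra are in the kernel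
  have hmono : ∀ (a : veronese K n (e+2)) (v : Fin n →₀ ℕ) (c : K),
      (↑a : MvPolynomial (Fin n) K) = monomial v c → mdeg v % (e+2) = 0 % (e+2) →
      S ↑a = ↑(D a) := by
    intro a v c hac hv0
    obtain ⟨k, hk⟩ : ∃ k, mdeg v = (e+2) * k := by
      rw [Nat.zero_mod] at hv0
      exact ⟨mdeg v / (e+2), (Nat.mul_div_cancel' (Nat.dvd_of_mod_eq_zero hv0)).symm⟩
    have hBker := hker_pow _ (hU i0) ((e+1) * k)
    have hB0 : ((((Vij i0 i0) ^ ((e+1)*k) : veronese K n (e+2))) : MvPolynomial (Fin n) K) ≠ 0 := by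
      rw [SubmonoidClass.coe_pow, hcoeV]
      exact pow_ne_zero _ (mul_ne_zero (X_ne_zero _) (pow_ne_zero _ (X_ne_zero _)))
    have hprodA : (↑a : MvPolynomial (Fin n) K) * ↑((Vij i0 i0) ^ ((e+1)*k))
        = c • ∏ j : Fin n, ((X j * X i0 ^ (e+1)) : MvPolynomial (Fin n) K) ^ (v j) := by
      have h1 : (∏ j : Fin n, ((X j * X i0 ^ (e+1)) : MvPolynomial (Fin n) K) ^ (v j))
          = (∏ j : Fin n, (X j : MvPolynomial (Fin n) K) ^ (v j)) *
            ∏ j : Fin n, ((X i0 : MvPolynomial (Fin n) K) ^ (e+1)) ^ (v j) := by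
        rw [← Finset.prod_mul_distrib]
        exact Finset.prod_congr rfl fun j _ => mul_pow _ _ _
      have h2 : (∏ j : Fin n, ((X i0 : MvPolynomial (Fin n) K) ^ (e+1)) ^ (v j))
          = ((X i0 : MvPolynomial (Fin n) K) ^ (e+1)) ^ ((e+2) * k) := by
        rw [Finset.prod_pow_eq_pow_sum]
        rw [show (∑ j : Fin n, v j) = mdeg v from sum_eq_mdeg, hk]
      rw [h1, h2, prod_X_pow_eq_monomial', MvPolynomial.smul_eq_C_mul, ← mul_assoc,
        C_mul_monomial, mul_one, hac, SubmonoidClass.coe_pow, hcoeV]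
      ring
    have haB : a * ((Vij i0 i0) ^ ((e+1)*k)) = c • ∏ j : Fin n, (Vij j i0) ^ (v j) := by
      apply Subtype.ext
      rw [MulMemClass.coe_mul, Subalgebra.coe_smul, SubmonoidClass.coe_finset_prod]
      simpa only [SubmonoidClass.coe_pow, hcoeV] using hprodA
    have hPker : S ↑(c • ∏ j : Fin n, (Vij j i0) ^ (v j))
        = ↑(D (c • ∏ j : Fin n, (Vij j i0) ^ (v j))) := by
      apply hker_smul
      refine Finset.prod_induction _ (fun x : veronese K n (e+2) => S ↑x = ↑(D x)) hker_mul hker_one ?_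
      intro j _
      exact hker_pow _ (hU j) _
    have habker : S ↑(a * ((Vij i0 i0) ^ ((e+1)*k)))
        = ↑(D (a * ((Vij i0 i0) ^ ((e+1)*k)))) := by
      rw [haB]
      exact hPker
    exact hker_cancel _ _ hB0 hBker habker
  -- every element of the Veronese algebra is in the kernel
  have hagree : ∀ a : veronese K n (e+2), S ↑a = ↑(D a) := by
    intro a
    have hamem : ∀ v ∈ (↑a : MvPolynomial (Fin n) K).support,
        monomial v (coeff v (↑a : MvPolynomial (Fin n) K)) ∈ veronese K n (e+2) := by
      intro v hv
      exact mem_veronese_iff.mpr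
        (monomial_mem_comp _ ((mem_veronese_iff.mp a.2) v hv))
    have hsplit : a = ∑ v ∈ (↑a : MvPolynomial (Fin n) K).support.attach,
        (⟨monomial v.1 (coeff v.1 (↑a : MvPolynomial (Fin n) K)), hamem v.1 v.2⟩ :
          veronese K n (e+2)) := by
      apply Subtype.ext
      rw [AddSubmonoidClass.coe_finset_sum]
      rw [show (∑ v ∈ (↑a : MvPolynomial (Fin n) K).support.attach,
        ((⟨monomial v.1 (coeff v.1 (↑a : MvPolynomial (Fin n) K)), hamem v.1 v.2⟩ :
          veronese K n (e+2)) : MvPolynomial (Fin n) K))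
        = ∑ v ∈ (↑a : MvPolynomial (Fin n) K).support.attach,
            monomial v.1 (coeff v.1 (↑a : MvPolynomial (Fin n) K)) from rfl]
      rw [Finset.sum_attach ((↑a : MvPolynomial (Fin n) K).support)
        (fun v => monomial v (coeff v (↑a : MvPolynomial (Fin n) K)))]
      exact (↑a : MvPolynomial (Fin n) K).as_sum
    have h1 : S ↑a = ∑ v ∈ (↑a : MvPolynomial (Fin n) K).support.attach,
        S ↑(⟨monomial v.1 (coeff v.1 (↑a : MvPolynomial (Fin n) K)), hamem v.1 v.2⟩ :
          veronese K n (e+2)) := by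
      conv_lhs => rw [hsplit]
      rw [AddSubmonoidClass.coe_finset_sum]
      exact map_sum S.toLinearMap _ _
    have h2 : (↑(D a) : MvPolynomial (Fin n) K)
        = ∑ v ∈ (↑a : MvPolynomial (Fin n) K).support.attach,
          (↑(D (⟨monomial v.1 (coeff v.1 (↑a : MvPolynomial (Fin n) K)), hamem v.1 v.2⟩ :
            veronese K n (e+2))) : MvPolynomial (Fin n) K) := by
      conv_lhs => rw [hsplit]
      rw [show D (∑ v ∈ (↑a : MvPolynomial (Fin n) K).support.attach,
          (⟨monomial v.1 (coeff v.1 (↑a : MvPolynomial (Fin n) K)), hamem v.1 v.2⟩ :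
            veronese K n (e+2)))
        = ∑ v ∈ (↑a : MvPolynomial (Fin n) K).support.attach,
            D (⟨monomial v.1 (coeff v.1 (↑a : MvPolynomial (Fin n) K)), hamem v.1 v.2⟩ :
              veronese K n (e+2)) from map_sum D.toLinearMap _ _,
        AddSubmonoidClass.coe_finset_sum]
    rw [h1, h2]
    refine Finset.sum_congr rfl fun v _ => ?_
    exact hmono _ v.1 _ rfl ((mem_veronese_iff.mp a.2) v.1 v.2)

  -- ===================== local nilpotency ======================
  have hSiter : ∀ (m : ℕ) (a : veronese K n (e+2)),
      (S.toLinearMap ^ m) (↑a : MvPolynomial (Fin n) K) = ↑((D.toLinearMap ^ m) a) := by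
    intro m
    induction m with
    | zero => intro a; simp
    | succ m ih =>
        intro a
        rw [pow_succ, Module.End.mul_apply, pow_succ, Module.End.mul_apply]
        have h1 : S.toLinearMap (↑a : MvPolynomial (Fin n) K) = ↑(D.toLinearMap a) := hagree a
        rw [h1]
        exact ih (D.toLinearMap a)
  have hA0nil : ∀ a : veronese K n (e+2),
      ∃ m, (S.toLinearMap ^ m) (↑a : MvPolynomial (Fin n) K) = 0 := by
    intro a
    obtain ⟨m, hm⟩ := hD a
    refine ⟨m, ?_⟩
    rw [hSiter m a, hm]
    rfl
  have key : ∀ (E : ℕ) (r : ℕ) (f : MvPolynomial (Fin n) K), f ∈ comp K n (e+2) r →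
      (S.toLinearMap ^ E) (f ^ (e+2)) = 0 → ∃ m, (S.toLinearMap ^ m) f = 0 := by
    intro E
    induction E with
    | zero =>
      intro r f hf h0
      refine ⟨0, ?_⟩
      simp only [pow_zero, Module.End.one_apply] at h0 ⊢
      exact (pow_eq_zero_iff (show e + 2 ≠ 0 by omega)).mp h0
    | succ E IH =>
      intro r f hf h0
      by_cases hf0 : f = 0
      · exact ⟨0, by simp [hf0]⟩
      by_cases hSf : S f = 0
      · refine ⟨1, ?_⟩
        rw [pow_one]
        exact hSf
      obtain ⟨p, hp1, hp2⟩ := nu_exists S.toLinearMap (pow_ne_zero _ hf0) h0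
      have hpE : p ≤ E := by
        by_contra hc
        exact hp1 (pow_apply_zero_mono S.toLinearMap h0 (by omega))
      have hfd : S (f ^ (e+2)) = (e+2) • (f ^ (e+1) * S f) := by
        rw [Derivation.leibniz_pow]
        simp only [smul_eq_mul, show e+2-1 = e+1 from rfl]
      rcases Nat.eq_zero_or_pos p with hp0 | hppos
      · exfalso
        subst hp0
        have h1 : (S.toLinearMap ^ 1) (f ^ (e+2)) = 0 := hp2
        rw [pow_one] at h1
        have h2 : S (f ^ (e+2)) = 0 := h1
        rw [hfd] at h2
        have h3 := (nsmul_eq_zero_iff' (show e + 2 ≠ 0 by omega)).mp h2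
        rcases mul_eq_zero.mp h3 with h4 | h4
        · exact pow_ne_zero _ hf0 h4
        · exact hSf h4
      obtain ⟨p', rfl⟩ : ∃ p', p = p' + 1 := ⟨p - 1, by omega⟩
      have hplus : ∀ m : ℕ, (S.toLinearMap ^ (m+1)) (f ^ (e+2))
          = (e+2) • (S.toLinearMap ^ m) (f ^ (e+1) * S f) := by
        intro m
        rw [pow_succ, Module.End.mul_apply,
          show S.toLinearMap (f ^ (e+2)) = (e+2) • (f ^ (e+1) * S f) from hfd, map_nsmul]
      have hg1 : (S.toLinearMap ^ p') (f ^ (e+1) * S f) ≠ 0 := by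
        intro hz
        apply hp1
        rw [hplus p', hz, smul_zero]
      have hg2 : (S.toLinearMap ^ (p'+1)) (f ^ (e+1) * S f) = 0 := by
        have h5 := hp2
        rw [hplus (p'+1)] at h5
        exact (nsmul_eq_zero_iff' (show e + 2 ≠ 0 by omega)).mp h5
      have hSfmem : S f ∈ comp K n (e+2) r := Sgrade r f hf
      have hSfd_mem : (S f) ^ (e+2) ∈ veronese K n (e+2) := by
        apply mem_veronese_iff.mpr
        have h6 := pow_mem_comp hSfmem (e+2)
        rwa [comp_congr (show ((e+2)*r) % (e+2) = 0 % (e+2) by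
          rw [Nat.zero_mod, Nat.mul_mod_right])] at h6
      obtain ⟨M, hM⟩ := hA0nil ⟨(S f) ^ (e+2), hSfd_mem⟩
      obtain ⟨q, hq1, hq2⟩ := nu_exists S.toLinearMap (pow_ne_zero _ hSf) hM
      have hident : (f ^ (e+1) * S f) ^ (e+2) = (f ^ (e+2)) ^ (e+1) * (S f) ^ (e+2) := by
        ring
      have hnu_g := nu_pow S hg1 hg2 (e+2)
      have hnu_fd := nu_pow S hp1 hp2 (e+1)
      have hnu_prod := nu_mul S hnu_fd.1 hnu_fd.2 hq1 hq2
      rw [← hident] at hnu_prod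
      have hequal : (e+2) * p' = (e+1) * (p'+1) + q := by
        by_contra hne
        rcases lt_or_gt_of_ne hne with hlt | hgt
        · exact hnu_prod.1 (pow_apply_zero_mono S.toLinearMap hnu_g.2 (by omega))
        · exact hnu_g.1 (pow_apply_zero_mono S.toLinearMap hnu_prod.2 (by omega))
      have hq_eq : p' = e + 1 + q := by
        have h7 : (e+1) * p' + p' = (e+1) * p' + (e + 1 + q) := by
          calc (e+1) * p' + p' = (e+2) * p' := by ring
          _ = (e+1) * (p'+1) + q := hequal
          _ = (e+1) * p' + (e + 1 + q) := by ring
        exact Nat.add_left_cancel h7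
      have hqE : q + 1 ≤ E := by omega
      obtain ⟨m, hm⟩ := IH r (S f) hSfmem
        (pow_apply_zero_mono S.toLinearMap hq2 (by omega))
      refine ⟨m + 1, ?_⟩
      rw [pow_succ, Module.End.mul_apply]
      exact hm
  have hcompnil : ∀ (r : ℕ) (f : MvPolynomial (Fin n) K), f ∈ comp K n (e+2) r →
      ∃ m, (S.toLinearMap ^ m) f = 0 := by
    intro r f hf
    have hfd_mem : f ^ (e+2) ∈ veronese K n (e+2) := by
      apply mem_veronese_iff.mpr
      have h6 := pow_mem_comp hf (e+2)
      rwa [comp_congr (show ((e+2)*r) % (e+2) = 0 % (e+2) by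
        rw [Nat.zero_mod, Nat.mul_mod_right])] at h6
    obtain ⟨M, hM⟩ := hA0nil ⟨f ^ (e+2), hfd_mem⟩
    exact key M r f hf hM
  -- ===================== conclusion ======================
  refine ⟨S, ?_, hagree, ?_⟩
  · intro i
    rw [show S (X i) = s i from hSX i]
    exact hsmem i
  · intro f
    induction f using MvPolynomial.induction_on with
    | C a =>
        refine ⟨1, ?_⟩
        rw [pow_one]
        exact MvPolynomial.derivation_C S a
    | add p q hp hq =>
        obtain ⟨mp, hmp⟩ := hp
        obtain ⟨mq, hmq⟩ := hq
        refine ⟨max mp mq, ?_⟩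
        rw [map_add, pow_apply_zero_mono S.toLinearMap hmp (le_max_left _ _),
          pow_apply_zero_mono S.toLinearMap hmq (le_max_right _ _), add_zero]
    | mul_X p i hp =>
        obtain ⟨mp, hmp⟩ := hp
        obtain ⟨mi, hmi⟩ := hcompnil 1 (X i) X_mem_comp
        exact ⟨mp + mi, nil_mul S hmp hmi⟩
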